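/- If for each p = 1,…,M the pair (Q⁽ᵖ⁾, F(m_p,n_p)) is a strictly feasible solution of the single-mode restriction SDP at level m_p (i.e., Q⁽ᵖ⁾ ≻ 0, F_k(m_p,n_p) > 0 for all k ≤ m_p, ∑_k F_k(m_p,n_p) = 1, and the linear antidiagonal constraints hold), then the tensor product Q = Q⁽¹⁾⊗⋯⊗Q⁽ᴹ⁾ and the product vector F_k = ∏_p F_{k_p}(m_p,n_p) form a strictly feasible solution of the multimode restriction SDP at level m = (m₁,…,m_M): Q ≻ 0, F_k > 0, ∑_{k≤m} F_k = 1, and for all l ≤ m, ∑_{i+j=2l} Q_{ij} = ∑_{k≥l} ((−1)^{|k|+|l|}/l!) binom(k,l) F_k, and ∑_{i+j=r} Q_{ij} = 0 for r ≤ 2m not of the form 2l. -/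

import Mathlib

open Finset Matrix

section Tensor
variable {M : ℕ} {m : Fin M → ℕ}

private def tens (A : ∀ p : Fin M, Matrix (Fin (m p + 1)) (Fin (m p + 1)) ℝ) :
    Matrix (∀ p, Fin (m p + 1)) (∀ p, Fin (m p + 1)) ℝ :=
  Matrix.of fun i j => ∏ p, A p (i p) (j p)

private lemma sum_prod_pi (g : ∀ p : Fin M, Fin (m p + 1) → ℝ) :
    ∑ i : ∀ p, Fin (m p + 1), ∏ p, g p (i p) = ∏ p, ∑ a, g p a := by
  rw [Finset.prod_univ_sum, Fintype.piFinset_univ]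

private lemma tens_mul (A B : ∀ p : Fin M, Matrix (Fin (m p + 1)) (Fin (m p + 1)) ℝ) :
    tens A * tens B = tens (fun p => A p * B p) := by
  ext i j
  simp only [Matrix.mul_apply, tens, Matrix.of_apply]
  rw [show ∑ k : ∀ p, Fin (m p + 1), (∏ p, A p (i p) (k p)) * ∏ p, B p (k p) (j p)
      = ∑ k : ∀ p, Fin (m p + 1), ∏ p, (A p (i p) (k p) * B p (k p) (j p)) from
    Finset.sum_congr rfl fun k _ => (Finset.prod_mul_distrib).symm]
  exact sum_prod_pi fun p a => A p (i p) a * B p a (j p)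

private lemma tens_one :
    tens (fun p : Fin M => (1 : Matrix (Fin (m p + 1)) (Fin (m p + 1)) ℝ)) = 1 := by
  ext i j
  simp only [tens, Matrix.of_apply, Matrix.one_apply]
  by_cases h : i = j
  · subst h; simp
  · rw [if_neg h]
    obtain ⟨p, hp⟩ := Function.ne_iff.mp h
    refine Finset.prod_eq_zero (Finset.mem_univ p) ?_
    simp [Matrix.one_apply, hp]

private lemma tens_conjTranspose (A : ∀ p : Fin M, Matrix (Fin (m p + 1)) (Fin (m p + 1)) ℝ) :
    (tens A)ᴴ = tens (fun p => (A p)ᴴ) := by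
  ext i j
  simp [tens, Matrix.conjTranspose_apply]

end Tensor

private lemma posDef_of_posSemidef_isUnit {n : Type*} [Fintype n] [DecidableEq n]
    {G : Matrix n n ℝ} (h1 : G.PosSemidef) (h2 : IsUnit G) : G.PosDef := by
  exact h1.posDef_iff_isUnit.mpr h2

private lemma prod_ite_all {M : ℕ} (P : Fin M → Prop) [∀ p, Decidable (P p)] (f : Fin M → ℝ) :
    (if (∀ p, P p) then ∏ p, f p else 0) = ∏ p, if P p then f p else 0 := by
  by_cases h : ∀ p, P p
  · rw [if_pos h]; exact Finset.prod_congr rfl fun p _ => (if_pos (h p)).symm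
  · rw [if_neg h]
    push_neg at h
    obtain ⟨p, hp⟩ := h
    refine (Finset.prod_eq_zero (Finset.mem_univ p) ?_).symm
    exact if_neg hp

/-- rewrite the antidiagonal double sum of the tensor matrix as a product -/
private lemma lhs_prod {M : ℕ} {m : Fin M → ℕ}
    (Q : ∀ p : Fin M, Matrix (Fin (m p + 1)) (Fin (m p + 1)) ℝ) (r : Fin M → ℕ) :
    (∑ i : ∀ p, Fin (m p + 1), ∑ j : ∀ p, Fin (m p + 1),
        if (∀ p, (i p : ℕ) + (j p : ℕ) = r p) then ∏ p, Q p (i p) (j p) else 0) =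
      ∏ p, ∑ a : Fin (m p + 1), ∑ b : Fin (m p + 1),
        if (a : ℕ) + (b : ℕ) = r p then Q p a b else 0 := by
  calc (∑ i : ∀ p, Fin (m p + 1), ∑ j : ∀ p, Fin (m p + 1),
        if (∀ p, (i p : ℕ) + (j p : ℕ) = r p) then ∏ p, Q p (i p) (j p) else 0)
      = ∑ i : ∀ p, Fin (m p + 1), ∑ j : ∀ p, Fin (m p + 1),
          ∏ p, (if (i p : ℕ) + (j p : ℕ) = r p then Q p (i p) (j p) else 0) := by
        refine Finset.sum_congr rfl fun i _ => Finset.sum_congr rfl fun j _ => ?_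
        exact prod_ite_all (fun p => (i p : ℕ) + (j p : ℕ) = r p) _
    _ = ∑ i : ∀ p, Fin (m p + 1), ∏ p, ∑ b : Fin (m p + 1),
          (if (i p : ℕ) + (b : ℕ) = r p then Q p (i p) b else 0) := by
        refine Finset.sum_congr rfl fun i _ => ?_
        exact sum_prod_pi fun p b => if (i p : ℕ) + (b : ℕ) = r p then Q p (i p) b else 0
    _ = _ := sum_prod_pi fun p a => ∑ b : Fin (m p + 1),
          if (a : ℕ) + (b : ℕ) = r p then Q p a b else 0

/-- Strict feasibility for the single-mode restriction SDP at level `m'` with target `n'`: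
`Q ≻ 0`, `F` strictly positive on `{0,…,m'}` and summing to one, the even antidiagonal
constraints hold, and odd antidiagonal sums vanish. -/
def StrictFeas1 (m' n' : ℕ) (Q : Matrix (Fin (m' + 1)) (Fin (m' + 1)) ℝ) (F : ℕ → ℝ) :
    Prop :=
  n' ≤ m' ∧ Q.PosDef ∧ (∀ k, k ≤ m' → 0 < F k) ∧
    (∑ k ∈ Finset.range (m' + 1), F k) = 1 ∧
    (∀ l : ℕ, l ≤ m' →
      (∑ a : Fin (m' + 1), ∑ b : Fin (m' + 1),
          if (a : ℕ) + (b : ℕ) = 2 * l then Q a b else 0) =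
        ∑ k ∈ Finset.Icc l m',
          ((-1) ^ (k + l) / (Nat.factorial l : ℝ)) * (Nat.choose k l : ℝ) * F k) ∧
    (∀ r : ℕ, r ≤ 2 * m' → Odd r →
      (∑ a : Fin (m' + 1), ∑ b : Fin (m' + 1),
        if (a : ℕ) + (b : ℕ) = r then Q a b else 0) = 0)

/-- tensor products of strictly feasible single-mode solutions give a
strictly feasible solution of the multimode restriction SDP. -/
theorem tensor_strict_feasible (M : ℕ) (m n : Fin M → ℕ)
    (Q : ∀ p : Fin M, Matrix (Fin (m p + 1)) (Fin (m p + 1)) ℝ)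
    (F : ∀ _ : Fin M, ℕ → ℝ)
    (hfeas : ∀ p, StrictFeas1 (m p) (n p) (Q p) (F p)) :
    (Matrix.PosDef
        (Matrix.of fun i j : ∀ p, Fin (m p + 1) => ∏ p, Q p (i p) (j p))) ∧
      (∀ k ∈ Finset.Iic m, 0 < ∏ p, F p (k p)) ∧
      (∑ k ∈ Finset.Iic m, ∏ p, F p (k p)) = 1 ∧
      (∀ l : Fin M → ℕ, (∀ p, l p ≤ m p) →
        (∑ i : ∀ p, Fin (m p + 1), ∑ j : ∀ p, Fin (m p + 1),
            if (∀ p, (i p : ℕ) + (j p : ℕ) = 2 * l p) then ∏ p, Q p (i p) (j p) else 0) =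
          ∑ k ∈ Finset.Icc l m,
            ((-1) ^ ((∑ p, k p) + ∑ p, l p) / (∏ p, (Nat.factorial (l p) : ℝ))) *
              (∏ p, (Nat.choose (k p) (l p) : ℝ)) * ∏ p, F p (k p)) ∧
      (∀ r : Fin M → ℕ, (∀ p, r p ≤ 2 * m p) → ¬(∀ p, Even (r p)) →
        (∑ i : ∀ p, Fin (m p + 1), ∑ j : ∀ p, Fin (m p + 1),
          if (∀ p, (i p : ℕ) + (j p : ℕ) = r p) then ∏ p, Q p (i p) (j p) else 0) = 0) := by
  have hQpd : ∀ p, (Q p).PosDef := fun p => (hfeas p).2.1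
  have hFpos : ∀ p, ∀ k, k ≤ m p → 0 < F p k := fun p => (hfeas p).2.2.1
  have hFsum : ∀ p, (∑ k ∈ Finset.range (m p + 1), F p k) = 1 := fun p => (hfeas p).2.2.2.1
  have heven := fun p => (hfeas p).2.2.2.2.1
  have hodd := fun p => (hfeas p).2.2.2.2.2
  refine ⟨?_, ?_, ?_, ?_, ?_⟩
  · -- positive definiteness
    choose B hB using fun p =>
      (show ∃ B : Matrix (Fin (m p + 1)) (Fin (m p + 1)) ℝ, Q p = star B * B by
        open scoped MatrixOrder in
        exact CStarAlgebra.nonneg_iff_eq_star_mul_self.mp (hQpd p).posSemidef.nonneg)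
    show (tens Q).PosDef
    have h1 : (tens Q).PosSemidef := by
      rw [show tens Q = (tens B)ᴴ * tens B by
        rw [tens_conjTranspose, tens_mul]
        exact congrArg tens (funext fun p => hB p)]
      exact Matrix.posSemidef_conjTranspose_mul_self _
    have h2 : IsUnit (tens Q) := by
      have hmul : tens Q * tens (fun p => (Q p)⁻¹) = 1 := by
        rw [tens_mul,
          show (fun p => Q p * (Q p)⁻¹) = fun p : Fin M => (1 : Matrix _ _ ℝ) from
            funext fun p => Matrix.mul_nonsing_inv _ (hQpd p).det_pos.ne'.isUnit,
          tens_one]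
      have := invertibleOfRightInverse _ _ hmul
      exact isUnit_of_invertible _
    exact posDef_of_posSemidef_isUnit h1 h2
  · intro k hk
    rw [Finset.mem_Iic] at hk
    exact Finset.prod_pos fun p _ => hFpos p (k p) (hk p)
  · have hIic : Finset.Iic m = Fintype.piFinset fun p => Finset.Iic (m p) := by
      ext k
      simp [Fintype.mem_piFinset, Pi.le_def]
    rw [hIic, ← Finset.prod_univ_sum]
    refine Finset.prod_eq_one fun p _ => ?_
    rw [show Finset.Iic (m p) = Finset.range (m p + 1) by ext a; simp [Nat.lt_succ_iff]]
    exact hFsum p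
  · intro l hl
    rw [lhs_prod]
    have hIcc : Finset.Icc l m = Fintype.piFinset fun p => Finset.Icc (l p) (m p) := by
      ext k
      simp [Fintype.mem_piFinset, Pi.le_def, forall_and]
    have hsummand : ∀ k : Fin M → ℕ,
        ((-1 : ℝ) ^ ((∑ p, k p) + ∑ p, l p) / (∏ p, (Nat.factorial (l p) : ℝ))) *
            (∏ p, (Nat.choose (k p) (l p) : ℝ)) * ∏ p, F p (k p)
          = ∏ p, (((-1 : ℝ) ^ (k p + l p) / (Nat.factorial (l p) : ℝ)) *
              (Nat.choose (k p) (l p) : ℝ) * F p (k p)) := by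
      intro k
      rw [Finset.prod_mul_distrib, Finset.prod_mul_distrib, Finset.prod_div_distrib,
        Finset.prod_pow_eq_pow_sum, Finset.sum_add_distrib]
    rw [hIcc]
    refine Eq.trans (Finset.prod_congr rfl fun p _ => heven p (l p) (hl p)) ?_
    refine Eq.trans (Finset.prod_univ_sum _ _) ?_
    exact Finset.sum_congr rfl fun k _ => (hsummand k).symm
  · intro r hr hne
    rw [lhs_prod]
    push_neg at hne
    obtain ⟨p, hp⟩ := hne
    exact Finset.prod_eq_zero (Finset.mem_univ p)
      (hodd p (r p) (hr p) (Nat.not_even_iff_odd.mp hp))
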